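/- arXiv:2204.06181 — 8 statements merged into one kernel-verified Lean document; each statement's English description precedes it below -/
import Mathlib

section
/- Let A be an m×n matrix with entries in [0,1] and b ∈ [0,1]^m. Define x̄_j = min over i of (if a_{ij} ≥ b_i then b_i + 1 - a_{ij} else 1). Then for every x ∈ [0,1]^n satisfying max_j T_L(a_{ij}, x_j) = b_i for all i, one has x ≤ x̄ componentwise. -/
/-- The Łukasiewicz t-norm. -/
noncomputable def TL (a x : ℝ) : ℝ := max (a + x - 1) 0

/-- The candidate maximum solution `x̄` (empty min = 1, handled by the `if`). -/
noncomputable def xbar {m n : ℕ} [NeZero m] (A : Fin m → Fin n → ℝ) (b : Fin m → ℝ)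
    (j : Fin n) : ℝ :=
  Finset.univ.inf' Finset.univ_nonempty
    (fun i => if b i ≤ A i j then b i + 1 - A i j else 1)

/-- `x` is a feasible solution of the system `A φ x = b`. -/
def Feasible {m n : ℕ} [NeZero m] [NeZero n] (A : Fin m → Fin n → ℝ) (b : Fin m → ℝ)
    (x : Fin n → ℝ) : Prop :=
  (∀ j, x j ∈ Set.Icc (0:ℝ) 1) ∧
  ∀ i, Finset.univ.sup' Finset.univ_nonempty (fun j => TL (A i j) (x j)) = b i

/-- The candidate minimal point `X(e)` associated to a selection `e`
(empty max = 0, handled by the `if`). -/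
noncomputable def Xe {m n : ℕ} [NeZero m] (A : Fin m → Fin n → ℝ) (b : Fin m → ℝ)
    (e : Fin m → Fin n) (j : Fin n) : ℝ :=
  Finset.univ.sup' Finset.univ_nonempty
    (fun i => if e i = j ∧ b i ≠ 0 then b i + 1 - A i j else 0)

/-- `e` is a valid selection: `e i ∈ J̄ᵢ` for every `i`. -/
def ValidSel {m n : ℕ} [NeZero m] (A : Fin m → Fin n → ℝ) (b : Fin m → ℝ)
    (e : Fin m → Fin n) : Prop :=
  ∀ i, b i ≤ A i (e i) ∧ TL (A i (e i)) (xbar A b (e i)) = b i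

theorem stmt_6 (m n : ℕ) [NeZero m] [NeZero n] (A : Fin m → Fin n → ℝ) (b : Fin m → ℝ)
    (hA : ∀ i j, A i j ∈ Set.Icc (0:ℝ) 1) (hb : ∀ i, b i ∈ Set.Icc (0:ℝ) 1)
    (x : Fin n → ℝ) (hx : Feasible A b x) :
    ∀ j, x j ≤ xbar A b j := by
  intro j
  apply Finset.le_inf'
  intro i _
  by_cases h : b i ≤ A i j
  · simp only [h, if_true]
    have hle : TL (A i j) (x j) ≤ b i := by
      rw [← hx.2 i]
      exact Finset.le_sup' (fun j => TL (A i j) (x j)) (Finset.mem_univ j)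
    have : A i j + x j - 1 ≤ b i := le_trans (le_max_left _ 0) hle
    linarith
  · simp only [h, if_false]
    exact (hx.1 j).2
end

section
/- Let A be an m×n matrix with entries in [0,1] and b ∈ [0,1]^m, and let x̄ be defined by x̄_j = min over {i : a_{ij} ≥ b_i} of (b_i + 1 - a_{ij}) (empty min = 1). The feasible set S(A,b) = {x ∈ [0,1]^n : max_j T_L(a_{ij}, x_j) = b_i for all i} is nonempty if and only if x̄ ∈ S(A,b). -/
theorem stmt_7 (m n : ℕ) [NeZero m] [NeZero n] (A : Fin m → Fin n → ℝ) (b : Fin m → ℝ)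
    (hA : ∀ i j, A i j ∈ Set.Icc (0:ℝ) 1) (hb : ∀ i, b i ∈ Set.Icc (0:ℝ) 1) :
    (∃ x, Feasible A b x) ↔ Feasible A b (xbar A b) := by
  have hxb1 : ∀ j, xbar A b j ∈ Set.Icc (0:ℝ) 1 := by
    intro j
    constructor
    · apply Finset.le_inf'
      intro i _
      split_ifs with h
      · have h1 := (hb i).1; have h2 := (hA i j).2; linarith
      · norm_num
    · refine Finset.inf'_le_of_le _ (Finset.mem_univ (0 : Fin m)) ?_
      split_ifs with h
      · have h2 := (hA (0 : Fin m) j).2; linarith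
      · exact le_rfl
  have hTLle : ∀ i j, TL (A i j) (xbar A b j) ≤ b i := by
    intro i j
    unfold TL
    apply max_le _ (hb i).1
    by_cases h : b i ≤ A i j
    · have h1 : xbar A b j ≤ if b i ≤ A i j then b i + 1 - A i j else 1 :=
        Finset.inf'_le _ (Finset.mem_univ i)
      rw [if_pos h] at h1
      linarith
    · push_neg at h
      have h1 := (hxb1 j).2
      linarith
  constructor
  · rintro ⟨x, hx01, hxeq⟩
    have hxle : ∀ j, x j ≤ xbar A b j := by
      intro j
      apply Finset.le_inf'
      intro i _
      split_ifs with h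
      · have h1 : TL (A i j) (x j) ≤ b i := by
          rw [← hxeq i]; exact Finset.le_sup' (fun j => TL (A i j) (x j)) (Finset.mem_univ j)
        have h2 : A i j + x j - 1 ≤ b i := le_trans (le_max_left _ _) h1
        linarith
      · exact (hx01 j).2
    refine ⟨hxb1, fun i => le_antisymm ?_ ?_⟩
    · exact Finset.sup'_le _ _ (fun j _ => hTLle i j)
    · rw [← hxeq i]
      apply Finset.sup'_le
      intro j _
      have hmono : TL (A i j) (x j) ≤ TL (A i j) (xbar A b j) :=
        max_le_max (by have := hxle j; linarith) le_rfl
      exact le_trans hmono (Finset.le_sup' (fun j => TL (A i j) (xbar A b j)) (Finset.mem_univ j))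
  · intro h; exact ⟨_, h⟩
end

section
/- With x̄ defined as the candidate maximum solution, for every x ∈ [0,1]^n and every i, if x ≤ x̄ componentwise then max_j T_L(a_{ij}, x_j) ≤ b_i. -/
theorem stmt_8 (m n : ℕ) [NeZero m] [NeZero n] (A : Fin m → Fin n → ℝ) (b : Fin m → ℝ)
    (hA : ∀ i j, A i j ∈ Set.Icc (0:ℝ) 1) (hb : ∀ i, b i ∈ Set.Icc (0:ℝ) 1)
    (x : Fin n → ℝ) (hx : ∀ j, x j ∈ Set.Icc (0:ℝ) 1)
    (hle : ∀ j, x j ≤ xbar A b j) :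
    ∀ i, Finset.univ.sup' Finset.univ_nonempty (fun j => TL (A i j) (x j)) ≤ b i := by
  intro i
  apply Finset.sup'_le
  intro j _
  unfold TL
  apply max_le _ (hb i).1
  by_cases h : b i ≤ A i j
  · have hxb := hle j
    have : xbar A b j ≤ b i + 1 - A i j := by
      unfold xbar
      exact Finset.inf'_le_of_le _ (Finset.mem_univ i) (by simp [h])
    linarith
  · have := (hx j).2
    linarith
end

section
/- Suppose S(A,b) ≠ ∅. Then for every i there exists j with a_{ij} ≥ b_i and T_L(a_{ij}, x̄_j) = b_i; that is, the set J̄_i = {j : a_{ij} ≥ b_i and T_L(a_{ij}, x̄_j) = b_i} is nonempty for each i. -/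
theorem stmt_9 (m n : ℕ) [NeZero m] [NeZero n] (A : Fin m → Fin n → ℝ) (b : Fin m → ℝ)
    (hA : ∀ i j, A i j ∈ Set.Icc (0:ℝ) 1) (hb : ∀ i, b i ∈ Set.Icc (0:ℝ) 1)
    (hS : ∃ x, Feasible A b x) :
    ∀ i, ∃ j, b i ≤ A i j ∧ TL (A i j) (xbar A b j) = b i := by
  obtain ⟨x, hx01, hxeq⟩ := hS
  -- x ≤ xbar
  have hxle : ∀ j, x j ≤ xbar A b j := by
    intro j
    apply Finset.le_inf'
    intro i _
    by_cases h : b i ≤ A i j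
    · simp only [h, if_true]
      have hsup : TL (A i j) (x j) ≤ b i := by
        rw [← hxeq i]
        exact Finset.le_sup' (fun k => TL (A i k) (x k)) (Finset.mem_univ j)
      have := le_max_left (A i j + x j - 1) 0
      have h2 : A i j + x j - 1 ≤ b i := le_trans this hsup
      linarith
    · simp only [h, if_false]
      exact (hx01 j).2
  -- TL (A i j) (xbar A b j) ≤ b i for all i j
  have hub : ∀ i j, TL (A i j) (xbar A b j) ≤ b i := by
    intro i j
    have hle : xbar A b j ≤ if b i ≤ A i j then b i + 1 - A i j else 1 :=
      Finset.inf'_le _ (Finset.mem_univ i)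
    by_cases h : b i ≤ A i j
    · rw [if_pos h] at hle
      unfold TL
      exact max_le (by linarith) (hb i).1
    · rw [if_neg h] at hle
      push_neg at h
      unfold TL
      exact max_le (by have := (hA i j).1; linarith) (hb i).1
  intro i
  by_cases hbi : b i = 0
  · have j0 : Fin n := ⟨0, Nat.pos_of_ne_zero (NeZero.ne n)⟩
    refine ⟨j0, hbi ▸ (hA i j0).1, ?_⟩
    have h1 := hub i j0
    have h2 : (0:ℝ) ≤ TL (A i j0) (xbar A b j0) := le_max_right _ _
    rw [hbi]; linarith [hbi ▸ h1]
  · -- b i > 0, take j achieving sup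
    obtain ⟨j, _, hj⟩ := Finset.exists_mem_eq_sup' (Finset.univ_nonempty)
      (fun j => TL (A i j) (x j))
    rw [hxeq i] at hj
    have hbpos : 0 < b i := lt_of_le_of_ne (hb i).1 (Ne.symm hbi)
    have hTL : TL (A i j) (x j) = b i := hj.symm
    have hTLpos : A i j + x j - 1 = b i := by
      unfold TL at hTL
      rcases max_cases (A i j + x j - 1) 0 with ⟨he, _⟩ | ⟨he, hlt⟩
      · rw [he] at hTL; exact hTL
      · rw [he] at hTL; exact absurd hTL.symm hbi
    refine ⟨j, by have := (hx01 j).2; linarith, ?_⟩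
    have hmono : TL (A i j) (x j) ≤ TL (A i j) (xbar A b j) := by
      unfold TL
      exact max_le_max (by linarith [hxle j]) le_rfl
    have := hub i j
    linarith [hTL ▸ hmono]
end

section
/- Assume S(A,b) ≠ ∅ and let e be a selection with e(i) ∈ J̄_i for all i. Then the point X(e) defined by X(e)_j = max_{i : e(i)=j, b_i ≠ 0}(b_i + 1 - a_{ij}) (empty max = 0) is a feasible solution: max_j T_L(a_{ij}, X(e)_j) = b_i for all i. -/
private lemma TL_mono (a : ℝ) {x y : ℝ} (h : x ≤ y) : TL a x ≤ TL a y :=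
  max_le_max (by linarith) le_rfl

private lemma xbar_nonneg {m n : ℕ} [NeZero m] (A : Fin m → Fin n → ℝ) (b : Fin m → ℝ)
    (hA : ∀ i j, A i j ∈ Set.Icc (0:ℝ) 1) (hb : ∀ i, b i ∈ Set.Icc (0:ℝ) 1) (j : Fin n) :
    0 ≤ xbar A b j := by
  apply Finset.le_inf'
  intro i _
  split_ifs with h
  · have := (hA i j).2; have := (hb i).1; linarith
  · norm_num

private lemma xbar_le_one {m n : ℕ} [NeZero m] (A : Fin m → Fin n → ℝ) (b : Fin m → ℝ)
    (j : Fin n) : xbar A b j ≤ 1 := by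
  obtain ⟨i⟩ := Finset.univ_nonempty (α := Fin m)
  refine le_trans (Finset.inf'_le _ (Finset.mem_univ i)) ?_
  split_ifs with h
  · linarith
  · exact le_rfl

private lemma TL_xbar_le {m n : ℕ} [NeZero m] (A : Fin m → Fin n → ℝ) (b : Fin m → ℝ)
    (hA : ∀ i j, A i j ∈ Set.Icc (0:ℝ) 1) (hb : ∀ i, b i ∈ Set.Icc (0:ℝ) 1)
    (i : Fin m) (j : Fin n) : TL (A i j) (xbar A b j) ≤ b i := by
  have hx : xbar A b j ≤ (if b i ≤ A i j then b i + 1 - A i j else 1) :=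
    Finset.inf'_le _ (Finset.mem_univ i)
  apply max_le
  · by_cases h : b i ≤ A i j
    · simp only [if_pos h] at hx; linarith
    · simp only [if_neg h] at hx
      push_neg at h
      linarith
  · exact (hb i).1

private lemma Xe_le_xbar {m n : ℕ} [NeZero m] (A : Fin m → Fin n → ℝ) (b : Fin m → ℝ)
    (hA : ∀ i j, A i j ∈ Set.Icc (0:ℝ) 1) (hb : ∀ i, b i ∈ Set.Icc (0:ℝ) 1)
    (e : Fin m → Fin n) (he : ValidSel A b e) (j : Fin n) :
    Xe A b e j ≤ xbar A b j := by
  apply Finset.sup'_le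
  intro k _
  split_ifs with h
  · obtain ⟨hek, hbk⟩ := h
    have h2 := (he k).2
    rw [hek] at h2
    unfold TL at h2
    rcases max_cases (A k j + xbar A b j - 1) 0 with ⟨h3, _⟩ | ⟨h3, _⟩
    · rw [h3] at h2; linarith
    · rw [h3] at h2; exact absurd h2.symm hbk
  · exact xbar_nonneg A b hA hb j

theorem stmt_11 (m n : ℕ) [NeZero m] [NeZero n] (A : Fin m → Fin n → ℝ) (b : Fin m → ℝ)
    (hA : ∀ i j, A i j ∈ Set.Icc (0:ℝ) 1) (hb : ∀ i, b i ∈ Set.Icc (0:ℝ) 1)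
    (hS : ∃ x, Feasible A b x)
    (e : Fin m → Fin n) (he : ValidSel A b e) :
    Feasible A b (Xe A b e) := by
  constructor
  · intro j
    constructor
    · obtain ⟨i⟩ := Finset.univ_nonempty (α := Fin m)
      refine le_trans ?_ (Finset.le_sup'
        (fun i => if e i = j ∧ b i ≠ 0 then b i + 1 - A i j else 0) (Finset.mem_univ i))
      split_ifs with h
      · have := (hb i).1; have := (hA i j).2; linarith
      · exact le_refl 0
    · apply Finset.sup'_le
      intro i _
      split_ifs with h
      · obtain ⟨hei, _⟩ := h
        have := (he i).1
        rw [hei] at this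
        linarith
      · norm_num
  · intro i
    apply le_antisymm
    · apply Finset.sup'_le
      intro j _
      exact le_trans (TL_mono _ (Xe_le_xbar A b hA hb e he j)) (TL_xbar_le A b hA hb i j)
    · refine le_trans ?_ (Finset.le_sup' (fun j => TL (A i j) (Xe A b e j))
        (Finset.mem_univ (e i)))
      by_cases hbi : b i = 0
      · rw [hbi]; exact le_max_right _ _
      · have hx : b i + 1 - A i (e i) ≤ Xe A b e (e i) :=
          Finset.le_sup' (α := ℝ)
            (fun k => if e k = e i ∧ b k ≠ 0 then b k + 1 - A k (e i) else 0)
            (Finset.mem_univ i) |>.trans_eq' (by simp [hbi])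
        calc b i ≤ A i (e i) + Xe A b e (e i) - 1 := by linarith
        _ ≤ TL (A i (e i)) (Xe A b e (e i)) := le_max_left _ _
end

section
/- Every feasible point x ∈ S(A,b) dominates some selection point: there exists a selection e with e(i) ∈ J̄_i for all i such that X(e) ≤ x componentwise. -/
theorem stmt_13 (m n : ℕ) [NeZero m] [NeZero n] (A : Fin m → Fin n → ℝ) (b : Fin m → ℝ)
    (hA : ∀ i j, A i j ∈ Set.Icc (0:ℝ) 1) (hb : ∀ i, b i ∈ Set.Icc (0:ℝ) 1)
    (x : Fin n → ℝ) (hx : Feasible A b x) :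
    ∃ e : Fin m → Fin n, ValidSel A b e ∧ ∀ j, Xe A b e j ≤ x j := by
  obtain ⟨hx01, hxeq⟩ := hx
  have hsel : ∀ i : Fin m, ∃ j, TL (A i j) (x j) = b i := by
    intro i
    obtain ⟨j, _, hj⟩ := Finset.exists_mem_eq_sup' (Finset.univ_nonempty)
      (fun j => TL (A i j) (x j))
    exact ⟨j, by rw [← hj]; exact hxeq i⟩
  choose e he using hsel
  have hble : ∀ i, b i ≤ A i (e i) := by
    intro i
    by_cases h : b i = 0
    · rw [h]; exact (hA i (e i)).1
    · have hbpos : 0 < b i := lt_of_le_of_ne (hb i).1 (Ne.symm h)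
      have := he i
      unfold TL at this
      have heq : A i (e i) + x (e i) - 1 = b i := by
        rcases max_cases (A i (e i) + x (e i) - 1) 0 with ⟨h1, _⟩ | ⟨h1, _⟩
        · rw [← this, h1]
        · exfalso; rw [h1] at this; exact h this.symm
      have hx1 : x (e i) ≤ 1 := (hx01 (e i)).2
      linarith
  have hxxbar : ∀ j, x j ≤ xbar A b j := by
    intro j
    apply Finset.le_inf'
    intro i _
    by_cases h : b i ≤ A i j
    · simp only [h, if_true]
      have hle : TL (A i j) (x j) ≤ b i := by
        rw [← hxeq i]
        exact Finset.le_sup' (fun j => TL (A i j) (x j)) (Finset.mem_univ j)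
      unfold TL at hle
      have := le_trans (le_max_left (A i j + x j - 1) 0) hle
      linarith
    · simp only [h, if_false]; exact (hx01 j).2
  refine ⟨e, fun i => ⟨hble i, ?_⟩, ?_⟩
  · apply le_antisymm
    · have hinf : xbar A b (e i) ≤ b i + 1 - A i (e i) := by
        unfold xbar
        have h2 := Finset.inf'_le
          (fun i' : Fin m => if b i' ≤ A i' (e i) then b i' + 1 - A i' (e i) else 1)
          (Finset.mem_univ i)
        simp only [hble i, if_true] at h2; exact h2
      unfold TL
      exact max_le (by linarith) (hb i).1
    · rw [← he i]
      unfold TL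
      exact max_le_max (by linarith [hxxbar (e i)]) le_rfl
  · intro j
    apply Finset.sup'_le
    intro i _
    by_cases h : e i = j ∧ b i ≠ 0
    · rw [if_pos h]
      obtain ⟨hej, hb0⟩ := h
      have hbpos : 0 < b i := lt_of_le_of_ne (hb i).1 (Ne.symm hb0)
      have hti := he i
      rw [hej] at hti
      unfold TL at hti
      have heq : A i j + x j - 1 = b i := by
        rcases max_cases (A i j + x j - 1) 0 with ⟨h1, _⟩ | ⟨h1, _⟩
        · rw [← hti, h1]
        · exfalso; rw [h1] at hti; exact hb0 hti.symm
      linarith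
    · rw [if_neg h]; exact (hx01 j).1
end

section
/- Let c ∈ ℝ^n and suppose S(A,b) ≠ ∅. Write c⁺_j = max(c_j,0), c⁻_j = min(c_j,0). Suppose x̄ minimizes Σ_j c⁻_j x_j over S(A,b) and x* minimizes Σ_j c⁺_j x_j over S(A,b). Define y_j = x̄_j if c_j ≤ 0 and y_j = x*_j if c_j > 0. Then y is feasible and minimizes Σ_j c_j x_j over S(A,b), provided x* = X(e*) for some selection e* with e*(i) ∈ J̄_i. -/
theorem stmt_16 (m n : ℕ) [NeZero m] [NeZero n] (A : Fin m → Fin n → ℝ) (b : Fin m → ℝ)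
    (hA : ∀ i j, A i j ∈ Set.Icc (0:ℝ) 1) (hb : ∀ i, b i ∈ Set.Icc (0:ℝ) 1)
    (c : Fin n → ℝ) (hS : ∃ x, Feasible A b x)
    (hxbarmin : ∀ x, Feasible A b x →
      ∑ j, min (c j) 0 * xbar A b j ≤ ∑ j, min (c j) 0 * x j)
    (xstar : Fin n → ℝ) (hxstar : Feasible A b xstar)
    (hxstarmin : ∀ x, Feasible A b x →
      ∑ j, max (c j) 0 * xstar j ≤ ∑ j, max (c j) 0 * x j)
    (estar : Fin m → Fin n) (hestar : ValidSel A b estar) (hxe : xstar = Xe A b estar) :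
    Feasible A b (fun j => if c j ≤ 0 then xbar A b j else xstar j) ∧
      ∀ x, Feasible A b x →
        ∑ j, c j * (if c j ≤ 0 then xbar A b j else xstar j) ≤ ∑ j, c j * x j := by

  classical
  set y : Fin n → ℝ := fun j => if c j ≤ 0 then xbar A b j else xstar j with hy
  -- basic facts about xbar
  have hxbar_mem : ∀ j, xbar A b j ∈ Set.Icc (0:ℝ) 1 := by
    intro j
    constructor
    · apply Finset.le_inf'
      intro i _
      split_ifs with h
      · linarith [(hb i).1, (hA i j).2]
      · norm_num
    · obtain ⟨i0, _⟩ := Finset.exists_mem_eq_inf' (Finset.univ_nonempty (α := Fin m))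
        (fun i => if b i ≤ A i j then b i + 1 - A i j else 1)
      calc xbar A b j ≤ (if b i0 ≤ A i0 j then b i0 + 1 - A i0 j else 1) :=
            Finset.inf'_le _ (Finset.mem_univ i0)
        _ ≤ 1 := by split_ifs with h <;> linarith
  have hTLxbar : ∀ i j, TL (A i j) (xbar A b j) ≤ b i := by
    intro i j
    have h1 : xbar A b j ≤ (if b i ≤ A i j then b i + 1 - A i j else 1) :=
      Finset.inf'_le _ (Finset.mem_univ i)
    unfold TL
    split_ifs at h1 with h
    · exact max_le (by linarith) (hb i).1
    · exact max_le (by push_neg at h; linarith [(hxbar_mem j).2]) (hb i).1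
  -- feasibility of y
  have hyfeas : Feasible A b y := by
    constructor
    · intro j
      by_cases h : c j ≤ 0
      · simpa [hy, h] using hxbar_mem j
      · simpa [hy, h] using hxstar.1 j
    · intro i
      apply le_antisymm
      · apply Finset.sup'_le
        intro j _
        by_cases h : c j ≤ 0
        · simpa [hy, h] using hTLxbar i j
        · have := (hxstar.2 i).le
          calc TL (A i j) (y j) = TL (A i j) (xstar j) := by simp [hy, h]
            _ ≤ _ := le_trans (Finset.le_sup' (fun j => TL (A i j) (xstar j)) (Finset.mem_univ j)) this
      · by_cases hb0 : b i = 0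
        · obtain ⟨j0, _⟩ := Finset.univ_nonempty (α := Fin n)
          calc b i = 0 := hb0
            _ ≤ TL (A i j0) (y j0) := le_max_right _ _
            _ ≤ _ := Finset.le_sup' (fun j => TL (A i j) (y j)) (Finset.mem_univ j0)
        · set j := estar i with hj
          have hle : TL (A i j) (y j) ≤ Finset.univ.sup' Finset.univ_nonempty
              (fun j => TL (A i j) (y j)) := Finset.le_sup' (fun j => TL (A i j) (y j)) (Finset.mem_univ j)
          refine le_trans ?_ hle
          by_cases h : c j ≤ 0
          · have := (hestar i).2
            simp only [hy, h, if_true]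
            exact this.ge
          · have hXe : b i + 1 - A i j ≤ Xe A b estar j := by
              have := Finset.le_sup' (fun i' =>
                if estar i' = j ∧ b i' ≠ 0 then b i' + 1 - A i' j else 0)
                (Finset.mem_univ i)
              unfold Xe
              exact le_trans (by simp [hj, hb0]) this
            have hxs : b i + 1 - A i j ≤ xstar j := by rw [hxe]; exact hXe
            simp only [hy, h, if_false]
            unfold TL
            exact le_max_of_le_left (by linarith)
  refine ⟨hyfeas, ?_⟩
  intro x hx
  show ∑ j, c j * y j ≤ ∑ j, c j * x j
  have hpt : ∀ j, c j * y j = min (c j) 0 * xbar A b j + max (c j) 0 * xstar j := by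
    intro j
    by_cases h : c j ≤ 0
    · simp [hy, h, min_eq_left h, max_eq_right h]
    · push_neg at h
      simp [hy, not_le.mpr h, min_eq_right h.le, max_eq_left h.le]
  calc ∑ j, c j * y j
      = ∑ j, (min (c j) 0 * xbar A b j + max (c j) 0 * xstar j) := by
        exact Finset.sum_congr rfl fun j _ => hpt j
    _ = (∑ j, min (c j) 0 * xbar A b j) + ∑ j, max (c j) 0 * xstar j :=
        Finset.sum_add_distrib
    _ ≤ (∑ j, min (c j) 0 * x j) + ∑ j, max (c j) 0 * x j :=
        add_le_add (hxbarmin x hx) (hxstarmin x hx)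
    _ = ∑ j, (min (c j) 0 * x j + max (c j) 0 * x j) := Finset.sum_add_distrib.symm
    _ = ∑ j, c j * x j := by
        refine Finset.sum_congr rfl fun j _ => ?_
        rcases le_total (c j) 0 with h | h
        · rw [min_eq_left h, max_eq_right h]; ring
        · rw [min_eq_right h, max_eq_left h]; ring
end

section
/- If a selection e satisfies e(i) ∈ J_i := {j : a_{ij} ≥ b_i} for all i but e(i₀) ∉ J̄_{i₀} for some i₀, then X(e) is infeasible: X(e) ∉ S(A,b). -/
theorem stmt_17 (m n : ℕ) [NeZero m] [NeZero n] (A : Fin m → Fin n → ℝ) (b : Fin m → ℝ)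
    (hA : ∀ i j, A i j ∈ Set.Icc (0:ℝ) 1) (hb : ∀ i, b i ∈ Set.Icc (0:ℝ) 1)
    (e : Fin m → Fin n) (he : ∀ i, b i ≤ A i (e i))
    (i₀ : Fin m) (hi₀ : TL (A i₀ (e i₀)) (xbar A b (e i₀)) ≠ b i₀) (hb₀ : b i₀ ≠ 0) :
    ¬ Feasible A b (Xe A b e) := by
  rintro ⟨hX, hfeas⟩
  set j₁ := e i₀ with hj₁
  have hble : b i₀ ≤ A i₀ j₁ := he i₀
  have hb0 : 0 ≤ b i₀ := (hb i₀).1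
  -- Xe j₁ ≥ b i₀ + 1 - A i₀ j₁
  have h1 : b i₀ + 1 - A i₀ j₁ ≤ Xe A b e j₁ := by
    have := Finset.le_sup'
      (fun i => if e i = j₁ ∧ b i ≠ 0 then b i + 1 - A i j₁ else 0)
      (Finset.mem_univ i₀)
    unfold Xe
    refine le_trans ?_ this
    simp [hb₀, hj₁]
  -- xbar j₁ < b i₀ + 1 - A i₀ j₁
  have h2 : xbar A b j₁ < b i₀ + 1 - A i₀ j₁ := by
    have hle : xbar A b j₁ ≤ b i₀ + 1 - A i₀ j₁ := by
      have := Finset.inf'_le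
        (fun i => if b i ≤ A i j₁ then b i + 1 - A i j₁ else 1)
        (Finset.mem_univ i₀)
      unfold xbar
      refine le_trans this ?_
      simp [hble]
    rcases lt_or_eq_of_le hle with h | h
    · exact h
    · exact absurd (by simp [TL, h]; linarith) hi₀
  -- the inf defining xbar j₁ is attained at some row i₂
  obtain ⟨i₂, -, hi₂⟩ := Finset.exists_mem_eq_inf' (s := (Finset.univ : Finset (Fin m)))
    Finset.univ_nonempty (fun i => if b i ≤ A i j₁ then b i + 1 - A i j₁ else 1)
  rw [← xbar] at hi₂
  have hc1 : b i₀ + 1 - A i₀ j₁ ≤ 1 := by linarith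
  have hcase : b i₂ ≤ A i₂ j₁ := by
    by_contra hcon
    rw [hi₂, if_neg hcon] at h2
    linarith
  rw [hi₂, if_pos hcase] at h2
  -- row i₂'s equation is violated
  have hTL : b i₂ < TL (A i₂ j₁) (Xe A b e j₁) := by
    have : b i₂ < A i₂ j₁ + Xe A b e j₁ - 1 := by linarith
    exact lt_of_lt_of_le this (le_max_left _ _)
  have hle : TL (A i₂ j₁) (Xe A b e j₁) ≤ b i₂ := by
    rw [← hfeas i₂]
    exact Finset.le_sup' (fun j => TL (A i₂ j) (Xe A b e j)) (Finset.mem_univ j₁)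
  linarith
end
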